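/- (Lemma 4.1.) Fix (i_0, …, i_T) ∈ {0,1}^{T+1}. In the IVR model, under consistency, sequential randomization (SR) and positivity (POS), one has, P-almost surely, E[ (∏_{j=0}^T W_j) · ∏_{j=0}^T 1{Z_j = i_j} / P(Z_j = i_j | G_j) | σ(X_0) ] = E[ ∏_{j=0}^T W_j(i_j) | σ(X_0) ]. -/

import Mathlib

/-!
(Lemma 4.1 of "The Instrumental Variable Method for Estimating Local Average
Treatment Regime Effects".)

IVR model: instruments `Z j`, potential treatments `W j i`, initial covariate `X0`,
potential outcomes `Y j w` (real-valued) and `X j w` (standard Borel valued);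
observed variables defined by consistency; `𝒪` is the σ-algebra of all potential
variables; `G j` is the observed history before `Z j`.  Under sequential
randomization (SR) and positivity (POS), for fixed `(i_0, …, i_T) ∈ {0,1}^{T+1}`,
`E[∏ W_j · ∏ 1{Z_j = i_j} / P(Z_j = i_j | G_j) | σ(X_0)]
  = E[∏ W_j(i_j) | σ(X_0)]` almost surely.
-/

open MeasureTheory ProbabilityTheory MeasurableSpace

lemma aux_setLIntegral_condexp {Ω : Type*} {m : MeasurableSpace Ω} {mΩ : MeasurableSpace Ω}
    {μ : Measure Ω} [IsFiniteMeasure μ] (hm : m ≤ mΩ)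
    {s : Set Ω} (hs : MeasurableSet[mΩ] s) {u : Ω → ENNReal} (hu : Measurable[m] u) :
    ∫⁻ ω in s, u ω ∂μ
      = ∫⁻ ω, u ω * ENNReal.ofReal ((μ[s.indicator (fun _ => (1:ℝ)) | m]) ω) ∂μ := by
  set g := μ[s.indicator (fun _ => (1:ℝ)) | m] with hg
  have hg_sm : StronglyMeasurable[m] g := stronglyMeasurable_condExp
  have hgnn : 0 ≤ᵐ[μ] g :=
    condExp_nonneg (ae_of_all _ fun ω => Set.indicator_nonneg (fun _ _ => zero_le_one) ω)
  have hind_int : Integrable (s.indicator fun _ => (1:ℝ)) μ := (integrable_const 1).indicator hs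
  have key : ∀ t, MeasurableSet[m] t →
      μ.restrict s t = (μ.withDensity fun ω => ENNReal.ofReal (g ω)) t := by
    intro t ht
    have htΩ : MeasurableSet[mΩ] t := hm t ht
    rw [Measure.restrict_apply htΩ, withDensity_apply _ htΩ]
    have h1 : ∫ ω in t, g ω ∂μ = ∫ ω in t, s.indicator (fun _ => (1:ℝ)) ω ∂μ :=
      setIntegral_condExp hm hind_int ht
    have h2 : ∫ ω in t, s.indicator (fun _ => (1:ℝ)) ω ∂μ = (μ (s ∩ t)).toReal := by
      rw [integral_indicator hs, setIntegral_const, smul_eq_mul, mul_one,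
        measureReal_def, Measure.restrict_apply hs]
    have h3 : ∫⁻ ω in t, ENNReal.ofReal (g ω) ∂μ = ENNReal.ofReal (∫ ω in t, g ω ∂μ) :=
      (ofReal_integral_eq_lintegral_ofReal (integrable_condExp.restrict)
        (ae_restrict_of_ae hgnn)).symm
    rw [h3, h1, h2, ENNReal.ofReal_toReal (measure_ne_top μ _), Set.inter_comm]
  have trim_eq : (μ.restrict s).trim hm = (μ.withDensity fun ω => ENNReal.ofReal (g ω)).trim hm :=
    @Measure.ext Ω m _ _ fun t ht => by
      rw [trim_measurableSet_eq hm ht, trim_measurableSet_eq hm ht, key t ht]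
  have hgmm : Measurable[m] g := hg_sm.measurable
  have hgm : Measurable[mΩ] fun ω => ENNReal.ofReal (g ω) :=
    ENNReal.measurable_ofReal.comp (hgmm.mono hm le_rfl)
  calc ∫⁻ ω in s, u ω ∂μ
      = ∫⁻ ω, u ω ∂((μ.restrict s).trim hm) := (lintegral_trim hm hu).symm
    _ = ∫⁻ ω, u ω ∂((μ.withDensity fun ω => ENNReal.ofReal (g ω)).trim hm) := by rw [trim_eq]
    _ = ∫⁻ ω, u ω ∂(μ.withDensity fun ω => ENNReal.ofReal (g ω)) := lintegral_trim hm hu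
    _ = ∫⁻ ω, ((fun ω => ENNReal.ofReal (g ω)) * u) ω ∂μ :=
        lintegral_withDensity_eq_lintegral_mul μ hgm ((hu.mono hm le_rfl : Measurable[mΩ] u))
    _ = ∫⁻ ω, u ω * ENNReal.ofReal (g ω) ∂μ := by
        refine lintegral_congr fun ω => ?_
        simp [mul_comm]

theorem lemma_4_1
    {Ω : Type*} {mΩ : MeasurableSpace Ω} [StandardBorelSpace Ω] [Nonempty Ω]
    (μ : Measure Ω) [IsProbabilityMeasure μ]
    (T : ℕ)
    -- spaces of covariate values (standard Borel)
    (𝒳 : ℕ → Type*) [∀ j, MeasurableSpace (𝒳 j)] [∀ j, StandardBorelSpace (𝒳 j)]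
    -- initial covariate, instruments, potential treatments, potential outcomes
    (X0 : Ω → 𝒳 0)
    (Z : Fin (T + 1) → Ω → Bool)
    (W : Fin (T + 1) → Bool → Ω → Bool)
    (Y : (j : Fin (T + 1)) → ((Fin (j.1 + 1)) → Bool) → Ω → ℝ)
    (X : (j : Fin (T + 1)) → ((Fin (j.1 + 1)) → Bool) → Ω → 𝒳 (j.1 + 1))
    (hX0 : Measurable X0)
    (hZ : ∀ j, Measurable (Z j))
    (hW : ∀ j b, Measurable (W j b))
    (hY : ∀ j w, Measurable (Y j w))
    (hX : ∀ j w, Measurable (X j w))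
    -- observed variables, via consistency
    (Wobs : Fin (T + 1) → Ω → Bool)
    (hWobs : ∀ j ω, Wobs j ω = W j (Z j ω) ω)
    (Yobs : Fin (T + 1) → Ω → ℝ)
    (hYobs : ∀ j ω, Yobs j ω = Y j (fun k => Wobs (Fin.castLE j.isLt k) ω) ω)
    (Xobs : (j : Fin (T + 1)) → Ω → 𝒳 (j.1 + 1))
    (hXobs : ∀ j ω, Xobs j ω = X j (fun k => Wobs (Fin.castLE j.isLt k) ω) ω)
    -- σ-algebra 𝒪 generated by X0 and all potential treatments and outcomes
    (mO : MeasurableSpace Ω)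
    (hmO : mO = MeasurableSpace.comap X0 inferInstance
        ⊔ (⨆ j, ⨆ b, MeasurableSpace.comap (W j b) inferInstance)
        ⊔ (⨆ j, ⨆ w, (MeasurableSpace.comap (Y j w) inferInstance
              ⊔ MeasurableSpace.comap (X j w) inferInstance)))
    -- observed history σ-algebras G_j = σ(O_0, …, O_j, Z_0, …, Z_{j-1})
    (G : Fin (T + 1) → MeasurableSpace Ω)
    (hGdef : ∀ j, G j = MeasurableSpace.comap X0 inferInstance
        ⊔ (⨆ k, ⨆ _ : (k : ℕ) < (j : ℕ),
            (MeasurableSpace.comap (Yobs (Fin.ofNat (T + 1) k)) inferInstance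
              ⊔ MeasurableSpace.comap (Xobs (Fin.ofNat (T + 1) k)) inferInstance
              ⊔ MeasurableSpace.comap (Z (Fin.ofNat (T + 1) k)) inferInstance)))
    (hGle : ∀ j, G j ≤ mΩ)
    -- (SR) sequential randomization: Z_j ⟂ 𝒪 | G_j
    (hSR : ∀ j, CondIndep (G j) (MeasurableSpace.comap (Z j) inferInstance) mO (hGle j) μ)
    -- (POS) positivity: 0 < P(Z_j = 1 | G_j) < 1 a.s.
    (hPOS : ∀ j, ∀ᵐ ω ∂μ,
        0 < (μ[fun ω' => if Z j ω' = true then (1 : ℝ) else 0 | G j]) ω ∧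
        (μ[fun ω' => if Z j ω' = true then (1 : ℝ) else 0 | G j]) ω < 1)
    -- fixed (i_0, …, i_T) ∈ {0,1}^{T+1}
    (i : Fin (T + 1) → Bool) :
    μ[fun ω => (∏ j, ((Wobs j ω).toNat : ℝ)) *
        ∏ j, (if Z j ω = i j then (1 : ℝ) else 0) /
          (μ[fun ω' => if Z j ω' = i j then (1 : ℝ) else 0 | G j]) ω
      | MeasurableSpace.comap X0 inferInstance]
    =ᵐ[μ]
    μ[fun ω => ∏ j, ((W j (i j) ω).toNat : ℝ)
      | MeasurableSpace.comap X0 inferInstance] := by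
  -- σ-algebra inequalities
  have hmOle : mO ≤ mΩ := by
    rw [hmO]
    exact sup_le (sup_le hX0.comap_le
        (iSup_le fun j => iSup_le fun b => (hW j b).comap_le))
      (iSup_le fun j => iSup_le fun w => sup_le (hY j w).comap_le (hX j w).comap_le)
  -- the set B of "all potential treatments 1"
  set B : Set Ω := {ω | ∀ j, W j (i j) ω = true} with hB_def
  have hB_mO : MeasurableSet[mO] B := by
    have hBeq : B = ⋂ j, (W j (i j)) ⁻¹' {true} := by
      ext ω; simp [hB_def, Set.mem_iInter]
    rw [hBeq]
    refine MeasurableSet.iInter fun j => ?_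
    have hle : MeasurableSpace.comap (W j (i j)) inferInstance ≤ mO := by
      rw [hmO]
      exact le_sup_of_le_left (le_sup_of_le_right
        (le_iSup_of_le j (le_iSup_of_le (i j) le_rfl)))
    exact hle _ ⟨{true}, measurableSet_singleton true, rfl⟩
  have ht1 : ∀ κ : Fin (T+1),
      MeasurableSet[MeasurableSpace.comap (Z κ) inferInstance] (Z κ ⁻¹' {i κ}) :=
    fun κ => ⟨{i κ}, measurableSet_singleton _, rfl⟩
  -- conditional independence fact
  have hfact0 : ∀ κ : Fin (T+1),
      (μ⟦(Z κ ⁻¹' {i κ}) ∩ B | G κ⟧) =ᵐ[μ]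
        (μ⟦Z κ ⁻¹' {i κ} | G κ⟧) * (μ⟦B | G κ⟧) := fun κ =>
    ((condIndep_iff (G κ) (MeasurableSpace.comap (Z κ) inferInstance) mO
        (hGle κ) (hZ κ).comap_le hmOle μ).mp (hSR κ)) _ _ (ht1 κ) hB_mO
  clear hB_mO hmOle hSR hmO mO hYobs hXobs hY hX
  -- basic σ-algebra facts about G
  have hm0 : MeasurableSpace.comap X0 inferInstance ≤ mΩ := hX0.comap_le
  have hm0G : ∀ j, MeasurableSpace.comap X0 inferInstance ≤ G j := by
    intro j; rw [hGdef j]; exact le_sup_left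
  have hGmono : ∀ a b : Fin (T+1), (a:ℕ) ≤ (b:ℕ) → G a ≤ G b := by
    intro a b hab
    rw [hGdef a, hGdef b]
    refine sup_le le_sup_left (le_sup_of_le_right ?_)
    exact iSup_le fun k => iSup_le fun hk =>
      le_iSup_of_le k (le_iSup_of_le (lt_of_lt_of_le hk hab) le_rfl)
  have hZGsub : ∀ (κ j : Fin (T+1)), (j:ℕ) < (κ:ℕ) →
      MeasurableSpace.comap (Z j) inferInstance ≤ G κ := by
    intro κ j hjκ
    rw [hGdef κ]
    refine le_sup_of_le_right (le_iSup_of_le (j:ℕ) (le_iSup_of_le hjκ ?_))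
    rw [Fin.ofNat_val_eq_self j]
    exact le_sup_right
  have hZmeasG : ∀ (κ j : Fin (T+1)), (j:ℕ) < (κ:ℕ) → Measurable[G κ] (Z j) :=
    fun κ j h => Measurable.of_comap_le (hZGsub κ j h)
  -- indicator functions of the instruments and their conditional expectations
  set ind : Fin (T+1) → Ω → ℝ := fun j ω => if Z j ω = i j then (1:ℝ) else 0 with hind_def
  set p : Fin (T+1) → Ω → ℝ := fun j => μ[ind j | G j] with hp_def
  have hind_meas : ∀ j, Measurable[mΩ] (ind j) := fun j =>
    (measurable_of_countable (fun b : Bool => if b = i j then (1:ℝ) else 0)).comp (hZ j)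
  have hind_measG : ∀ (κ j : Fin (T+1)), (j:ℕ) < (κ:ℕ) → Measurable[G κ] (ind j) := fun κ j h =>
    (measurable_of_countable (fun b : Bool => if b = i j then (1:ℝ) else 0)).comp (hZmeasG κ j h)
  have hind_nonneg : ∀ j ω, 0 ≤ ind j ω := by
    intro j ω; simp only [hind_def]; split_ifs <;> norm_num
  have hind_le_one : ∀ j ω, ind j ω ≤ 1 := by
    intro j ω; simp only [hind_def]; split_ifs <;> norm_num
  have hind_int : ∀ j, Integrable (ind j) μ := by
    intro j
    refine (integrable_const (1:ℝ)).mono' (hind_meas j).aestronglyMeasurable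
      (ae_of_all _ fun ω => ?_)
    rw [Real.norm_eq_abs, abs_of_nonneg (hind_nonneg j ω)]
    exact hind_le_one j ω
  have hp_smG : ∀ j, StronglyMeasurable[G j] (p j) := fun j => stronglyMeasurable_condExp
  have hp_meas : ∀ j, Measurable[mΩ] (p j) := fun j =>
    ((hp_smG j).measurable.mono (hGle j) le_rfl)
  -- positivity of p
  have hp_pos : ∀ᵐ ω ∂μ, ∀ j, 0 < p j ω := by
    rw [ae_all_iff]
    intro j
    rcases Bool.dichotomy (i j) with hij | hij
    · -- i j = false
      have hfun : ind j = (fun _ => (1:ℝ)) - (fun ω => if Z j ω = true then (1:ℝ) else 0) := by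
        funext ω
        simp only [hind_def, Pi.sub_apply, hij]
        cases hzw : Z j ω <;> simp
      have e2 := condExp_sub (μ := μ) (m := G j) (integrable_const (1:ℝ))
        (f := fun _ => (1:ℝ)) (g := fun ω => if Z j ω = true then (1:ℝ) else 0)
        (by
          refine (integrable_const (1:ℝ)).mono'
            (((measurable_of_countable (fun b : Bool => if b = true then (1:ℝ) else 0)).comp
              (hZ j)).aestronglyMeasurable) (ae_of_all _ fun ω => ?_)
          rw [Real.norm_eq_abs]
          split_ifs <;> norm_num)
      have e1 : p j = μ[(fun _ => (1:ℝ)) - (fun ω => if Z j ω = true then (1:ℝ) else 0) | G j] := by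
        simp only [hp_def]; rw [hfun]
      filter_upwards [e2, hPOS j] with ω h1 h2
      have h3 : p j ω = 1 - (μ[fun ω' => if Z j ω' = true then (1:ℝ) else 0 | G j]) ω := by
        rw [e1, h1]
        simp [condExp_const (hGle j)]
      rw [h3]
      linarith [h2.2]
    · -- i j = true
      have hfun : ind j = fun ω => if Z j ω = true then (1:ℝ) else 0 := by
        funext ω; simp only [hind_def, hij]
      have e1 : p j = μ[fun ω' => if Z j ω' = true then (1:ℝ) else 0 | G j] := by
        simp only [hp_def]; rw [hfun]
      filter_upwards [hPOS j] with ω h2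
      rw [e1]; exact h2.1
  -- the function f = indicator of B
  set f : Ω → ℝ := fun ω => ∏ j, ((W j (i j) ω).toNat : ℝ) with hf_def
  have hf_meas : Measurable[mΩ] f := by
    refine Finset.measurable_prod _ fun j _ => ?_
    exact (measurable_of_countable (fun b : Bool => ((b.toNat : ℕ) : ℝ))).comp (hW j (i j))
  have hf_nonneg : ∀ ω, 0 ≤ f ω := fun ω =>
    Finset.prod_nonneg fun j _ => by positivity
  have hf_le_one : ∀ ω, f ω ≤ 1 := fun ω =>
    Finset.prod_le_one (fun j _ => by positivity)
      (fun j _ => by cases hb : W j (i j) ω <;> simp [hb])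
  have hf_int : Integrable f μ := by
    refine (integrable_const (1:ℝ)).mono' hf_meas.aestronglyMeasurable (ae_of_all _ fun ω => ?_)
    rw [Real.norm_eq_abs, abs_of_nonneg (hf_nonneg ω)]
    exact hf_le_one ω
  have hfB : B.indicator (fun _ => (1:ℝ)) = f := by
    funext ω
    by_cases h : ω ∈ B
    · rw [Set.indicator_of_mem h]
      exact (Finset.prod_eq_one fun j _ => by rw [h j]; norm_num).symm
    · rw [Set.indicator_of_notMem h]
      obtain ⟨j, hj⟩ := not_forall.mp h
      refine (Finset.prod_eq_zero (Finset.mem_univ j) ?_).symm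
      have hw : W j (i j) ω = false := by
        cases hzz : W j (i j) ω
        · rfl
        · exact absurd hzz hj
      rw [hw]; norm_num
  have ht1ind : ∀ κ : Fin (T+1), (Z κ ⁻¹' {i κ}).indicator (fun _ => (1:ℝ)) = ind κ := by
    intro κ; funext ω
    simp only [hind_def]
    by_cases h : Z κ ω = i κ <;> simp [Set.indicator_apply, h]
  have ht1Bind : ∀ κ : Fin (T+1),
      ((Z κ ⁻¹' {i κ}) ∩ B).indicator (fun _ => (1:ℝ)) = fun ω => ind κ ω * f ω := by
    intro κ; funext ω
    rw [← hfB, ← ht1ind κ]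
    by_cases h1 : ω ∈ Z κ ⁻¹' {i κ} <;> by_cases h2 : ω ∈ B <;>
      simp [Set.indicator_apply, h1, h2]
  -- key conditional independence identity in functional form
  have hfact : ∀ κ : Fin (T+1),
      μ[(fun ω => ind κ ω * f ω) | G κ] =ᵐ[μ] fun ω => p κ ω * (μ[f | G κ]) ω := by
    intro κ
    have h := hfact0 κ
    rw [ht1Bind κ, ht1ind κ, hfB] at h
    exact h
  clear hfact0 ht1 hB_def
  set m0 := MeasurableSpace.comap X0 inferInstance with hm0_def
  set H : ℕ → Ω → ℝ :=
    fun k ω => ∏ j ∈ Finset.univ.filter (fun j : Fin (T+1) => (j:ℕ) < k), ind j ω / p j ω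
    with hH_def
  have hH_meas : ∀ k, Measurable[mΩ] (H k) := by
    intro k; simp only [hH_def]
    exact Finset.measurable_prod _ fun j _ => (hind_meas j).div (hp_meas j)
  have hH_measG : ∀ (k : ℕ) (κ : Fin (T+1)), k ≤ (κ:ℕ) → Measurable[G κ] (H k) := by
    intro k κ hkκ; simp only [hH_def]
    refine Finset.measurable_prod _ fun j hj => ?_
    have hjk : (j:ℕ) < k := (Finset.mem_filter.mp hj).2
    have hjκ : (j:ℕ) < (κ:ℕ) := lt_of_lt_of_le hjk hkκ
    exact (hind_measG κ j hjκ).div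
      ((hp_smG j).measurable.mono (hGmono j κ (le_of_lt hjκ)) le_rfl)
  have hH_nonneg : ∀ᵐ ω ∂μ, ∀ k, 0 ≤ H k ω := by
    filter_upwards [hp_pos] with ω hω k
    simp only [hH_def]
    exact Finset.prod_nonneg fun j _ => div_nonneg (hind_nonneg j ω) (hω j).le
  have hsplit : ∀ (k : ℕ) (hk : k < T+1) (ω : Ω),
      H (k+1) ω = (ind ⟨k,hk⟩ ω / p ⟨k,hk⟩ ω) * H k ω := by
    intro k hk ω
    simp only [hH_def]
    have hset : Finset.univ.filter (fun j : Fin (T+1) => (j:ℕ) < k+1)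
        = insert (⟨k,hk⟩ : Fin (T+1)) (Finset.univ.filter fun j : Fin (T+1) => (j:ℕ) < k) := by
      ext j
      simp only [Finset.mem_filter, Finset.mem_insert, Finset.mem_univ, true_and, Fin.ext_iff]
      omega
    rw [hset, Finset.prod_insert (by simp)]
  -- main induction
  have key : ∀ k : ℕ, k ≤ T+1 → Integrable (H k) μ ∧
      μ[(fun ω => f ω * H k ω) | m0] =ᵐ[μ] μ[f | m0] := by
    intro k
    induction k with
    | zero =>
      intro _
      have hH0 : H 0 = fun _ => (1:ℝ) := by
        funext ω; simp only [hH_def]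
        rw [Finset.filter_false_of_mem (fun j _ => Nat.not_lt_zero _), Finset.prod_empty]
      constructor
      · rw [hH0]; exact integrable_const 1
      · have heq : (fun ω => f ω * H 0 ω) = f := by funext ω; rw [hH0]; simp
        rw [heq]
    | succ k ih =>
      intro hk1
      have hk : k < T + 1 := hk1
      obtain ⟨IH1, IH2⟩ := ih (Nat.le_of_succ_le hk1)
      set κ : Fin (T+1) := ⟨k, hk⟩ with hκ_def
      have hHkG : Measurable[G κ] (H k) := hH_measG k κ (le_of_eq rfl)
      have hu_smG : StronglyMeasurable[G κ] (fun ω => H k ω / p κ ω) :=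
        (hHkG.div (hp_smG κ).measurable).stronglyMeasurable
      have ht1s : MeasurableSet[mΩ] (Z κ ⁻¹' {i κ}) := (hZ κ) (measurableSet_singleton _)
      have humeas : Measurable[G κ] (fun ω => ENNReal.ofReal (H k ω / p κ ω)) :=
        ENNReal.measurable_ofReal.comp (hHkG.div ((hp_smG κ).measurable))
      have haux := aux_setLIntegral_condexp (μ := μ) (hGle κ) ht1s humeas
      rw [ht1ind κ] at haux
      have hpκrfl : μ[ind κ | G κ] = p κ := rfl
      rw [hpκrfl] at haux
      -- integrability of H (k+1)
      have hfin : ∫⁻ ω, ↑‖H (k+1) ω‖₊ ∂μ < ⊤ := by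
        have e1 : ∫⁻ ω, ↑‖H (k+1) ω‖₊ ∂μ
            = ∫⁻ ω, (Z κ ⁻¹' {i κ}).indicator (fun ω => ENNReal.ofReal (H k ω / p κ ω)) ω ∂μ := by
          refine lintegral_congr_ae ?_
          filter_upwards [hp_pos, hH_nonneg] with ω hpω hHω
          by_cases hmem : ω ∈ Z κ ⁻¹' {i κ}
          · have hz : Z κ ω = i κ := hmem
            have hindeq : ind κ ω = 1 := by simp only [hind_def]; rw [if_pos hz]
            have hval : H (k+1) ω = H k ω / p κ ω := by
              rw [hsplit k hk ω, ← hκ_def, hindeq, one_div_mul_eq_div]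
            rw [Set.indicator_of_mem hmem, hval,
              ← enorm_eq_nnnorm, Real.enorm_eq_ofReal (div_nonneg (hHω k) (hpω κ).le)]
          · have hz : ¬ Z κ ω = i κ := hmem
            have hindeq : ind κ ω = 0 := by simp only [hind_def]; rw [if_neg hz]
            have hval : H (k+1) ω = 0 := by
              rw [hsplit k hk ω, ← hκ_def, hindeq, zero_div, zero_mul]
            rw [Set.indicator_of_notMem hmem, hval]; simp
        rw [e1, lintegral_indicator ht1s _, haux]
        have e2 : ∫⁻ ω, ENNReal.ofReal (H k ω / p κ ω) * ENNReal.ofReal (p κ ω) ∂μ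
            = ∫⁻ ω, ↑‖H k ω‖₊ ∂μ := by
          refine lintegral_congr_ae ?_
          filter_upwards [hp_pos, hH_nonneg] with ω hpω hHω
          rw [← ENNReal.ofReal_mul (div_nonneg (hHω k) (hpω κ).le),
            div_mul_cancel₀ _ (ne_of_gt (hpω κ)), ← enorm_eq_nnnorm, Real.enorm_eq_ofReal (hHω k)]
        rw [e2]
        exact IH1.2
      have hHk1_int : Integrable (H (k+1)) μ := ⟨(hH_meas (k+1)).aestronglyMeasurable, hfin⟩
      -- the conditional expectation step
      have hFk1_int : Integrable (fun ω => f ω * H (k+1) ω) μ := by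
        refine hHk1_int.mono ((hf_meas.mul (hH_meas (k+1))).aestronglyMeasurable)
          (ae_of_all _ fun ω => ?_)
        rw [Real.norm_eq_abs, Real.norm_eq_abs, abs_mul]
        calc |f ω| * |H (k+1) ω| ≤ 1 * |H (k+1) ω| := by
              refine mul_le_mul_of_nonneg_right ?_ (abs_nonneg _)
              rw [abs_of_nonneg (hf_nonneg ω)]; exact hf_le_one ω
          _ = |H (k+1) ω| := one_mul _
      have hg2_int : Integrable (fun ω => ind κ ω * f ω) μ := by
        refine (integrable_const (1:ℝ)).mono'
          (((hind_meas κ).mul hf_meas).aestronglyMeasurable) (ae_of_all _ fun ω => ?_)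
        rw [Real.norm_eq_abs, abs_mul, abs_of_nonneg (hind_nonneg κ ω),
          abs_of_nonneg (hf_nonneg ω)]
        calc ind κ ω * f ω ≤ 1 * 1 :=
              mul_le_mul (hind_le_one κ ω) (hf_le_one ω) (hf_nonneg ω) zero_le_one
          _ = 1 := mul_one 1
      have hprod_int : Integrable ((fun ω => H k ω / p κ ω) * (fun ω => ind κ ω * f ω)) μ :=
        hFk1_int.congr (ae_of_all _ fun ω => by
          simp only [Pi.mul_apply]
          rw [hsplit k hk ω, ← hκ_def]; ring)
      have c1 : μ[(fun ω => f ω * H (k+1) ω)|G κ]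
          =ᵐ[μ] μ[((fun ω => H k ω / p κ ω) * (fun ω => ind κ ω * f ω))|G κ] :=
        condExp_congr_ae (ae_of_all _ fun ω => by
          simp only [Pi.mul_apply]
          rw [hsplit k hk ω, ← hκ_def]; ring)
      have c2 := condExp_mul_of_stronglyMeasurable_left hu_smG hprod_int hg2_int
      have c3 : (fun ω => H k ω / p κ ω) * μ[(fun ω => ind κ ω * f ω)|G κ]
          =ᵐ[μ] fun ω => H k ω * (μ[f|G κ]) ω := by
        filter_upwards [hfact κ, hp_pos] with ω h1 h2
        simp only [Pi.mul_apply]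
        rw [h1]
        have hne : p κ ω ≠ 0 := (h2 κ).ne'
        field_simp
      have hHf_int : Integrable ((H k) * f) μ := by
        refine IH1.mono (((hH_meas k).mul hf_meas).aestronglyMeasurable)
          (ae_of_all _ fun ω => ?_)
        rw [Pi.mul_apply, Real.norm_eq_abs, Real.norm_eq_abs, abs_mul]
        calc |H k ω| * |f ω| ≤ |H k ω| * 1 := by
              refine mul_le_mul_of_nonneg_left ?_ (abs_nonneg _)
              rw [abs_of_nonneg (hf_nonneg ω)]; exact hf_le_one ω
          _ = |H k ω| := mul_one _
      have c5' := condExp_mul_of_stronglyMeasurable_left hHkG.stronglyMeasurable hHf_int hf_int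
      have c5 : (fun ω => H k ω * (μ[f|G κ]) ω) =ᵐ[μ] μ[((H k) * f)|G κ] := c5'.symm
      have c6 : μ[((H k) * f)|G κ] =ᵐ[μ] μ[(fun ω => f ω * H k ω)|G κ] :=
        condExp_congr_ae (ae_of_all _ fun ω => by simp only [Pi.mul_apply]; ring)
      have total : μ[(fun ω => f ω * H (k+1) ω)|G κ] =ᵐ[μ] μ[(fun ω => f ω * H k ω)|G κ] :=
        c1.trans (c2.trans (c3.trans (c5.trans c6)))
      refine ⟨hHk1_int, ?_⟩
      calc μ[(fun ω => f ω * H (k+1) ω)|m0]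
          =ᵐ[μ] μ[μ[(fun ω => f ω * H (k+1) ω)|G κ]|m0] :=
            (condExp_condExp_of_le (hm0G κ) (hGle κ)).symm
        _ =ᵐ[μ] μ[μ[(fun ω => f ω * H k ω)|G κ]|m0] := condExp_congr_ae total
        _ =ᵐ[μ] μ[(fun ω => f ω * H k ω)|m0] := condExp_condExp_of_le (hm0G κ) (hGle κ)
        _ =ᵐ[μ] μ[f|m0] := IH2
  -- conclusion
  have huniv : Finset.univ.filter (fun j : Fin (T+1) => (j:ℕ) < T+1) = Finset.univ :=
    Finset.filter_true_of_mem fun j _ => j.isLt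
  have hLHS : (fun ω => (∏ j, ((Wobs j ω).toNat : ℝ)) * ∏ j, ind j ω / p j ω)
      =ᵐ[μ] (fun ω => f ω * H (T+1) ω) := by
    refine ae_of_all _ fun ω => ?_
    show (∏ j, ((Wobs j ω).toNat : ℝ)) * (∏ j, ind j ω / p j ω) = f ω * H (T+1) ω
    have hH : H (T+1) ω = ∏ j, ind j ω / p j ω := by simp only [hH_def]; rw [huniv]
    rw [hH]
    by_cases hall : ∀ j, Z j ω = i j
    · have hWeq : ∀ j : Fin (T+1), Wobs j ω = W j (i j) ω := fun j => by
        rw [hWobs j ω, hall j]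
      have heq : (∏ j, ((Wobs j ω).toNat : ℝ)) = f ω := by
        simp only [hf_def]
        exact Finset.prod_congr rfl fun j _ => by rw [hWeq j]
      rw [heq]
    · obtain ⟨j, hj⟩ := not_forall.mp hall
      have hz : (∏ j', ind j' ω / p j' ω) = 0 := by
        refine Finset.prod_eq_zero (Finset.mem_univ j) ?_
        simp only [hind_def]; rw [if_neg hj, zero_div]
      rw [hz, mul_zero, mul_zero]
  exact (condExp_congr_ae hLHS).trans (key (T+1) le_rfl).2
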